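/- arXiv:1407.1249 — 2 statements merged into one kernel-verified Lean document; each statement's English description precedes it below -/
import Mathlib

section
/- With M̄, N̄, h̄ as in the context, the kernel of the linear map given by N̄ is the internal direct sum of the range of the linear map given by M̄ and the line spanned by h̄: ker(N̄) = range(M̄) ⊕ ℚ·h̄. (Equivalently, the cohomology H⁷(ham₂)₈ = ker d / im d is one-dimensional, spanned by the class of h̄ = ω ∧ h; this proves the Kontsevich homomorphism ω∧ : H⁵(ham⁰₂)₁₀ → H⁷(ham₂)₈ is an isomorphism.) -/
open Matrix

def Mbt : Matrix (Fin 18) (Fin 14) ℚ :=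
  !![135/4, 0, -20, -60, 15, 5/4, -135/4, -15, -15, 0, 0, 0, 0, 0; -18, -12, 0, 0, 0, 23/3, -45, 21, 10, 0, 0, 0, 0, 0; -27/4, 0, -20, 12, 3, 0, 0, 0, 0, 63/8, -18, 0, 0, 0; 0, 0, 2, -10, 2/3, 1, 2, -1/3, 2, -7, 1, 0, 0, 0; 0, -11/2, -17, 9, 71/12, 7/8, 51/8, 233/12, 10, -49/4, 4, 0, 0, 0; 0, -1/3, -9, 5, 49/18, 5/12, 55/4, 47/9, 19/3, -28/3, -1/6, 0, 0, 0; 0, -5/2, -20, 0, 65/12, -15/8, -75/8, 65/12, -5, 35/4, -25/2, 0, 0, 0; 0, 0, 0, 0, 0, 7, -18, -9, 6, 0, 0, 0, 0, 0; 0, 0, -2, -6, 0, 0, 0, 0, 0, -21/2, 6, 70, 0, 0; -1/2, 2, -2, 14/3, 1/3, 0, 0, 0, 0, 0, 0, 0, -28, -14/3; -5/2, 2, 0, 16/3, -1/3, 0, 0, 0, 0, 0, 0, 0, -28, -28/3; 0, 8, 0, 0, 0, -3, 0, 1, -6, 0, 0, 0, -112, 0; 0, 0, 0, 0, 0, -1,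 15, -6, 0, -3/2, -3, 0, 48, -14; 0, 0, 0, 0, 0, -2/3, -1, -1, -2, 5/2, -1, 0, 4, -14/3; 0, 0, 0, 0, 4/3, 11/3, -45, 46/3, 0, 5/2, 11, 0, -136, 14; 0, 0, 2, 0, -1, -3/2, 123/8, -4, 0, -21/16, -33/16, 0, 42, -21/8; 0, 0, 0, 2, -1/3, -1/2, 39/8, -4/3, 0, 7/16, -13/16, 0, 14, -35/24; 0, 0, 0, 0, 0, 0, 0, 0, 0, 1, -1, -20/3, 0, 2]

def Mb : Matrix (Fin 14) (Fin 18) ℚ := Mbt.transpose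

def Nb : Matrix (Fin 4) (Fin 14) ℚ :=
  !![0, -35, 0, 0, 0, -30, 0, -15, 25/2, 0, 0, 0, -5/2, 0; 11, -9, -39/8, -31/8, -61/2, -75, -10, -10, 85/2, -2/3, -20/3, 0, -1, -3; -16, 8, 9, 5, 52, 20, 8/3, -2, -55/3, 0, 8, 0, 1, 4; 0, 0, 63/2, 21/2, 84, 0, 0, 0, 0, 0, -14, 3, 0, 3]

def hb : Fin 14 → ℚ := ![0, 0, 0, 0, 0, 0, -9, 0, 0, 105, 3, 14, 0, 0]

def Sm : Matrix (Fin 18) (Fin 14) ℚ :=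
  !![0, 0, 0, 0, 91/1215, -11/21, -34/405, -401/3402, 3077/11340, -184/25515, 34/3645, -16/8505, 13/4860, -13/1215; 0, 0, 0, 0, 4553/79380, -7267/6860, -2341/13230, -253901/1111320, 88265/148176, -6218/416745, 361/119070, -347/138915, 4553/2222640, -4553/555660; 0, 0, 0, 0, -4451/59535, 20327/15435, 3974/19845, 232667/833490, -77207/111132, 22304/1250235, -10754/178605, 3266/416745, -4451/1666980, 4451/416745; 0, 0, 0, 0, -16313/26460, 70801/6860, 6751/4410, 733121/370440, -255845/49392, 17978/138915, -1831/39690, 1082/46305, -16313/740880, 16313/185220; 0, 0, 0, 0, -9362/59535, 45034/15435, 9008/19845, 280807/416745, -89419/55566, 47888/1250235, -1688/178605, 2732/416745, -4681/833490, 9362/416745; 0, 0, 0, 0, 1502/2835, -5464/735, -1058/945, -31897/19845, 10681/2646, -5648/59535, 398/8505, -362/19845, 751/39690, -1502/19845; 0, 0, 0, 0, 0, 0, 0, 0, 0, 0, 0, 0, 0, 0; 0, 0, 0, 0, 0, 0, 0, 0, 0, 0, 0, 0, 0, 0; 0, 0, 0, 0, 1/756, -31/588, -1/126, -97/10584, 169/7056,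 -10/3969, -1/1134, 37/2646, 1/21168, -1/5292; 0, 0, 0, 0, 0, 0, 0, 0, 0, 0, 0, 0, -1/14, 3/14; 0, 0, 0, 0, 0, 0, 0, 0, 0, 0, 0, 0, 1/28, -3/14; 0, 0, 0, 0, 0, 0, 0, 0, 0, 0, 0, 0, 0, 0; 0, 0, 0, 0, 0, 0, 0, 0, 0, 0, 0, 0, 0, 0; 0, 0, 0, 0, 0, 0, 0, 0, 0, 0, 0, 0, 0, 0; 0, 0, 0, 0, 0, 0, 0, 0, 0, 0, 0, 0, 0, 0; 0, 0, 0, 0, 0, 0, 0, 0, 0, 0, 0, 0, 0, 0; 0, 0, 0, 0, 0, 0, 0, 0, 0, 0, 0, 0, 0, 0; 0, 0, 0, 0, 0, 0, 0, 0, 0, 0, 0, 0, 0, 0]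

def Km : Matrix (Fin 14) (Fin 4) ℚ :=
  !![0, -1/7, -9/56, 1/42; -1/35, 0, 0, 0; -4/105, 8/21, 11/42, 1/63; 4/35, -8/7, -11/14, 1/21; 0, 0, 0, 0; 0, 0, 0, 0; 0, 0, 0, 0; 0, 0, 0, 0; 0, 0, 0, 0; 0, 0, 0, 0; 0, 0, 0, 0; 0, 0, 0, 0; 0, 0, 0, 0; 0, 0, 0, 0]

def cv : Fin 14 → ℚ := ![0, 0, 0, 0, -5/756, 155/588, 5/126, 485/10584, -845/7056, 50/3969, 5/1134, 2/1323, -5/21168, 5/5292]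

def fv : Fin 14 → ℚ := ![-4/189, 1/84, 1/48, -1/144, 5/42, -17/21, -1/9, -1/7, 25/63, 0, 0, 0, 0, 0]


def P1 : Matrix (Fin 14) (Fin 14) ℚ :=
  !![0, 0, 0, 0, 2, -15/2, -1, -7/4, 25/8, -2/21, 2/3, -1/14, 1/56, 1/7; 0, 0, 0, 0, 0, -6/7, 0, -3/7, 5/14, 0, 0, 0, -1/14, 0; 0, 0, 0, 0, -10/3, 466/21, 28/9, 79/21, -1375/126, 16/63, 2/3, -1/21, 1/42, 1/21; 0, 0, 0, 0, 2, -466/7, -28/3, -79/7, 1375/42, -16/21, -2/3, -1/7, -1/14, -3/7; 0, 0, 0, 0, 1, 0, 0, 0, 0, 0, 0, 0, 0, 0; 0, 0, 0, 0, 0, 1, 0, 0, 0, 0, 0, 0, 0, 0; 0, 0, 0, 0, -5/84, 465/196, 19/14, 485/1176, -845/784, 50/441, 5/126, 2/147, -5/2352, 5/588; 0, 0, 0, 0, 0, 0, 0, 1, 0, 0, 0, 0, 0, 0; 0, 0, 0, 0, 0, 0, 0, 0, 1, 0, 0, 0, 0, 0; 0, 0, 0, 0, 25/36, -775/28, -25/6,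 -2425/504, 4225/336, -61/189, -25/54, -10/63, 25/1008, -25/252; 0, 0, 0, 0, 5/252, -155/196, -5/42, -485/3528, 845/2352, -50/1323, 373/378, -2/441, 5/7056, -5/1764; 0, 0, 0, 0, 5/54, -155/42, -5/9, -485/756, 845/504, -100/567, -5/81, 185/189, 5/1512, -5/378; 0, 0, 0, 0, 0, 0, 0, 0, 0, 0, 0, 0, 1, 0; 0, 0, 0, 0, 0, 0, 0, 0, 0, 0, 0, 0, 0, 1]

def P2 : Matrix (Fin 14) (Fin 14) ℚ :=
  !![1, 0, 0, 0, -2, 15/2, 1, 7/4, -25/8, 2/21, -2/3, 1/14, -1/56, -1/7; 0, 1, 0, 0, 0, 6/7, 0, 3/7, -5/14, 0, 0, 0, 1/14, 0; 0, 0, 1, 0, 10/3, -466/21, -28/9, -79/21, 1375/126, -16/63, -2/3, 1/21, -1/42, -1/21; 0, 0, 0, 1, -2, 466/7, 28/3, 79/7, -1375/42, 16/21, 2/3, 1/7, 1/14, 3/7; 0, 0, 0, 0, 0, 0, 0, 0, 0, 0, 0, 0, 0, 0; 0, 0, 0, 0, 0, 0, 0, 0, 0, 0, 0, 0, 0, 0;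 0, 0, 0, 0, 0, 0, 0, 0, 0, 0, 0, 0, 0, 0; 0, 0, 0, 0, 0, 0, 0, 0, 0, 0, 0, 0, 0, 0; 0, 0, 0, 0, 0, 0, 0, 0, 0, 0, 0, 0, 0, 0; 0, 0, 0, 0, 0, 0, 0, 0, 0, 0, 0, 0, 0, 0; 0, 0, 0, 0, 0, 0, 0, 0, 0, 0, 0, 0, 0, 0; 0, 0, 0, 0, 0, 0, 0, 0, 0, 0, 0, 0, 0, 0; 0, 0, 0, 0, 0, 0, 0, 0, 0, 0, 0, 0, 0, 0; 0, 0, 0, 0, 0, 0, 0, 0, 0, 0, 0, 0, 0, 0]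

def P3 : Matrix (Fin 14) (Fin 14) ℚ :=
  !![0, 0, 0, 0, 0, 0, 0, 0, 0, 0, 0, 0, 0, 0; 0, 0, 0, 0, 0, 0, 0, 0, 0, 0, 0, 0, 0, 0; 0, 0, 0, 0, 0, 0, 0, 0, 0, 0, 0, 0, 0, 0; 0, 0, 0, 0, 0, 0, 0, 0, 0, 0, 0, 0, 0, 0; 0, 0, 0, 0, 0, 0, 0, 0, 0, 0, 0, 0, 0, 0; 0, 0, 0, 0, 0, 0, 0, 0, 0, 0, 0, 0, 0, 0; 0, 0, 0, 0, 5/84, -465/196, -5/14, -485/1176, 845/784, -50/441, -5/126, -2/147, 5/2352, -5/588; 0, 0, 0, 0, 0, 0, 0, 0, 0, 0, 0, 0, 0, 0; 0, 0, 0, 0, 0, 0, 0, 0, 0, 0, 0, 0, 0, 0; 0, 0, 0, 0, -25/36, 775/28, 25/6, 2425/504, -4225/336, 250/189, 25/54, 10/63, -25/1008, 25/252; 0, 0, 0, 0, -5/252, 155/196, 5/42, 485/3528, -845/2352, 50/1323, 5/378, 2/441, -5/7056, 5/1764; 0, 0, 0, 0, -5/54, 155/42, 5/9, 485/756, -845/504,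 100/567, 5/81, 4/189, -5/1512, 5/378; 0, 0, 0, 0, 0, 0, 0, 0, 0, 0, 0, 0, 0, 0; 0, 0, 0, 0, 0, 0, 0, 0, 0, 0, 0, 0, 0, 0]

def Em : Matrix (Fin 14) (Fin 14) ℚ :=
  !![1, 0, 0, 0, 0, 0, 0, 0, 0, 0, 0, 0, 0, 0; 0, 1, 0, 0, 0, 0, 0, 0, 0, 0, 0, 0, 0, 0; 0, 0, 1, 0, 0, 0, 0, 0, 0, 0, 0, 0, 0, 0; 0, 0, 0, 1, 0, 0, 0, 0, 0, 0, 0, 0, 0, 0; 0, 0, 0, 0, 1, 0, 0, 0, 0, 0, 0, 0, 0, 0; 0, 0, 0, 0, 0, 1, 0, 0, 0, 0, 0, 0, 0, 0; 0, 0, 0, 0, 0, 0, 1, 0, 0, 0, 0, 0, 0, 0; 0, 0, 0, 0, 0, 0, 0, 1, 0, 0, 0, 0, 0, 0; 0, 0, 0, 0, 0, 0, 0, 0, 1, 0, 0, 0, 0, 0; 0, 0, 0, 0, 0, 0, 0, 0, 0, 1, 0, 0, 0, 0; 0, 0, 0, 0, 0, 0, 0, 0, 0, 0, 1, 0, 0,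 0; 0, 0, 0, 0, 0, 0, 0, 0, 0, 0, 0, 1, 0, 0; 0, 0, 0, 0, 0, 0, 0, 0, 0, 0, 0, 0, 1, 0; 0, 0, 0, 0, 0, 0, 0, 0, 0, 0, 0, 0, 0, 1]

set_option maxHeartbeats 2000000 in
lemma NM : Nb * Mb = 0 := by
  rw [← Matrix.ext_iff]
  simp only [Fin.forall_fin_succ, Fin.forall_fin_zero_pi, forall_const, Nb, Mb, Mbt,
    Matrix.mul_apply, Fin.sum_univ_succ, Fin.sum_univ_zero, Matrix.transpose, Matrix.of_apply,
    Matrix.cons_val_zero, Matrix.cons_val_succ, Matrix.cons_val_one, Fin.succ_zero_eq_one,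
    Matrix.head_cons, Matrix.tail_cons, Matrix.vecHead, Matrix.vecTail, Function.comp,
    Matrix.zero_apply, Matrix.add_apply, Matrix.vecMulVec, Matrix.mulVec, Matrix.vecMul,
    dotProduct, Pi.zero_apply]
  norm_num

set_option maxHeartbeats 2000000 in
lemma MS : Mb * Sm = P1 := by
  rw [← Matrix.ext_iff]
  simp only [Fin.forall_fin_succ, Fin.forall_fin_zero_pi, forall_const, Mb, Mbt, Sm, P1,
    Matrix.mul_apply, Fin.sum_univ_succ, Fin.sum_univ_zero, Matrix.transpose, Matrix.of_apply,
    Matrix.cons_val_zero, Matrix.cons_val_succ, Matrix.cons_val_one, Fin.succ_zero_eq_one,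
    Matrix.head_cons, Matrix.tail_cons, Matrix.vecHead, Matrix.vecTail, Function.comp,
    Matrix.zero_apply, Matrix.add_apply, Matrix.vecMulVec, Matrix.mulVec, Matrix.vecMul,
    dotProduct, Pi.zero_apply]
  norm_num

set_option maxHeartbeats 2000000 in
lemma KN : Km * Nb = P2 := by
  rw [← Matrix.ext_iff]
  simp only [Fin.forall_fin_succ, Fin.forall_fin_zero_pi, forall_const, Km, Nb, P2,
    Matrix.mul_apply, Fin.sum_univ_succ, Fin.sum_univ_zero, Matrix.transpose, Matrix.of_apply,
    Matrix.cons_val_zero, Matrix.cons_val_succ, Matrix.cons_val_one, Fin.succ_zero_eq_one,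
    Matrix.head_cons, Matrix.tail_cons, Matrix.vecHead, Matrix.vecTail, Function.comp,
    Matrix.zero_apply, Matrix.add_apply, Matrix.vecMulVec, Matrix.mulVec, Matrix.vecMul,
    dotProduct, Pi.zero_apply]
  norm_num

set_option maxHeartbeats 2000000 in
lemma vmv : Matrix.vecMulVec hb cv = P3 := by
  rw [← Matrix.ext_iff]
  simp only [Fin.forall_fin_succ, Fin.forall_fin_zero_pi, forall_const, hb, cv, P3,
    Matrix.mul_apply, Fin.sum_univ_succ, Fin.sum_univ_zero, Matrix.transpose, Matrix.of_apply,
    Matrix.cons_val_zero, Matrix.cons_val_succ, Matrix.cons_val_one, Fin.succ_zero_eq_one,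
    Matrix.head_cons, Matrix.tail_cons, Matrix.vecHead, Matrix.vecTail, Function.comp,
    Matrix.zero_apply, Matrix.add_apply, Matrix.vecMulVec, Matrix.mulVec, Matrix.vecMul,
    dotProduct, Pi.zero_apply]
  norm_num

set_option maxHeartbeats 2000000 in
lemma ksum : P1 + P2 + P3 = Em := by
  rw [← Matrix.ext_iff]
  simp only [Fin.forall_fin_succ, Fin.forall_fin_zero_pi, forall_const, P1, P2, P3, Em,
    Matrix.mul_apply, Fin.sum_univ_succ, Fin.sum_univ_zero, Matrix.transpose, Matrix.of_apply,
    Matrix.cons_val_zero, Matrix.cons_val_succ, Matrix.cons_val_one, Fin.succ_zero_eq_one,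
    Matrix.head_cons, Matrix.tail_cons, Matrix.vecHead, Matrix.vecTail, Function.comp,
    Matrix.zero_apply, Matrix.add_apply, Matrix.vecMulVec, Matrix.mulVec, Matrix.vecMul,
    dotProduct, Pi.zero_apply]
  norm_num

lemma Em_eq : Em = 1 := by decide

lemma key : Mb * Sm + Km * Nb + Matrix.vecMulVec hb cv = 1 := by
  rw [MS, KN, vmv, ksum, Em_eq]

set_option maxHeartbeats 2000000 in
lemma Nh : Nb.mulVec hb = 0 := by
  funext i
  revert i
  simp only [Fin.forall_fin_succ, Fin.forall_fin_zero_pi, forall_const, Nb, hb,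
    Matrix.mul_apply, Fin.sum_univ_succ, Fin.sum_univ_zero, Matrix.transpose, Matrix.of_apply,
    Matrix.cons_val_zero, Matrix.cons_val_succ, Matrix.cons_val_one, Fin.succ_zero_eq_one,
    Matrix.head_cons, Matrix.tail_cons, Matrix.vecHead, Matrix.vecTail, Function.comp,
    Matrix.zero_apply, Matrix.add_apply, Matrix.vecMulVec, Matrix.mulVec, Matrix.vecMul,
    dotProduct, Pi.zero_apply]
  norm_num

set_option maxHeartbeats 2000000 in
lemma fM : Matrix.vecMul fv Mb = 0 := by
  funext i
  revert i
  simp only [Fin.forall_fin_succ, Fin.forall_fin_zero_pi, forall_const, fv, Mb, Mbt,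
    Matrix.mul_apply, Fin.sum_univ_succ, Fin.sum_univ_zero, Matrix.transpose, Matrix.of_apply,
    Matrix.cons_val_zero, Matrix.cons_val_succ, Matrix.cons_val_one, Fin.succ_zero_eq_one,
    Matrix.head_cons, Matrix.tail_cons, Matrix.vecHead, Matrix.vecTail, Function.comp,
    Matrix.zero_apply, Matrix.add_apply, Matrix.vecMulVec, Matrix.mulVec, Matrix.vecMul,
    dotProduct, Pi.zero_apply]
  norm_num

lemma fh : fv ⬝ᵥ hb = 1 := by
  norm_num [dotProduct, Fin.sum_univ_succ, fv, hb]

lemma vvm (a b x : Fin 14 → ℚ) : (Matrix.vecMulVec a b).mulVec x = (b ⬝ᵥ x) • a := by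
  funext i
  simp [Matrix.vecMulVec, Matrix.mulVec, dotProduct, Finset.mul_sum, mul_assoc,
    mul_comm, mul_left_comm]

theorem stmt14 :
    LinearMap.ker Nb.mulVecLin = LinearMap.range Mb.mulVecLin ⊔ Submodule.span ℚ {hb} ∧
    LinearMap.range Mb.mulVecLin ⊓ Submodule.span ℚ {hb} = ⊥ := by
  constructor
  · apply le_antisymm
    · intro x hx
      have hx0 : Nb.mulVec x = 0 := hx
      have hkey := congrArg (fun A => Matrix.mulVec A x) key
      simp only [Matrix.add_mulVec, Matrix.one_mulVec] at hkey
      rw [← Matrix.mulVec_mulVec, ← Matrix.mulVec_mulVec, hx0, Matrix.mulVec_zero,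
        add_zero, vvm] at hkey
      refine Submodule.mem_sup.mpr ⟨Mb.mulVec (Sm.mulVec x), ⟨Sm.mulVec x, rfl⟩,
        (cv ⬝ᵥ x) • hb, Submodule.smul_mem _ _ (Submodule.mem_span_singleton_self hb), hkey⟩
    · apply sup_le
      · rintro x ⟨y, rfl⟩
        show Nb.mulVec (Mb.mulVec y) = 0
        rw [Matrix.mulVec_mulVec, NM, Matrix.zero_mulVec]
      · rw [Submodule.span_le, Set.singleton_subset_iff]
        exact Nh
  · rw [eq_bot_iff]
    rintro x ⟨⟨y, rfl⟩, hsp⟩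
    simp only [Submodule.mem_bot, Matrix.mulVecLin_apply] at *
    obtain ⟨t, ht⟩ := Submodule.mem_span_singleton.mp hsp
    have h1 : fv ⬝ᵥ Mb.mulVec y = 0 := by
      rw [Matrix.dotProduct_mulVec, fM, zero_dotProduct]
    have h2 : fv ⬝ᵥ (t • hb) = t := by
      rw [dotProduct_smul, fh, smul_eq_mul, mul_one]
    have h3 : t = fv ⬝ᵥ Mb.mulVec y := by rw [← ht]; exact h2.symm
    rw [← ht, h3.trans h1, zero_smul]
end

section
/- The rank of the 12×9 matrix M plus the dimension of the quotient ker(N)/im(M) plus the rank of N equals 12, i.e. 7 + 1 + 4 = 12 = dim C⁵, verifying the rank–nullity bookkeeping of the weight-10 complex. -/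
open Matrix

def Mt : Matrix (Fin 9) (Fin 12) ℚ :=
  !![-135/4, 0, -60, 15/2, -45, -15, 5/4, -45/4, 75/2, 0, 0, 0; 108/11, 18/11, 0, 0, 0, 60/11, 46/11, -90/11, 156/11, 0, 0, 0; 27/4, 0, 12, -9/2, -9, 0, 0, 0, 0, 27/4, 18, 0; 0, 0, -10, 2/3, -2, 2, 1, 0, 6, 4, -1, 0; 0, 5/2, 29, 47/3, -23, 43, 13/2, 9/2, 25, 16, -71/2, 0; 0, 5, 45, 155/6, -40, 65, 10, 0, 50, 20, -115/2, 0; 0, 3/2, 18, 23/2, -3, 30, 11/2, 9/2, 9, 6, -33, 0; 0, 0, 0, 0, 0, 6, 7, 0, -6, 0, 0, 0; 0, 0, -6, -3, 0, 0, 0, 0, 0, 3, -6, 70]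

def M : Matrix (Fin 12) (Fin 9) ℚ := Mt.transpose

def N : Matrix (Fin 4) (Fin 12) ℚ :=
  !![0, 140, 0, 0, 0, -15, 15, 30, 5/2, 0, 0, 0; -5, -4, 1/4, -11/2, 31/12, 31/6, -3, -2, 5/3, -1, 2, 0; -16, 32, -2, -12, 22/3, 58/3, -18, -12, -5/3, 0, 8, 0; 0, 0, 0, 42, 7, 0, 0, 0, 0, 0, 14, 3]

def H : Type :=
  LinearMap.ker N.mulVecLin ⧸
    (Submodule.comap (LinearMap.ker N.mulVecLin).subtype (LinearMap.range M.mulVecLin))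

noncomputable instance : AddCommGroup H := by unfold H; infer_instance
noncomputable instance : Module ℚ H := by unfold H; infer_instance


set_option maxHeartbeats 2000000 in
lemma NM_zero : N * M = 0 := by
  ext i j
  fin_cases i <;> fin_cases j <;>
    norm_num [M, Mt, N, Matrix.mul_apply, Fin.sum_univ_succ, Matrix.transpose_apply,
      Matrix.vecHead, Matrix.vecTail]

lemma hle : LinearMap.range M.mulVecLin ≤ LinearMap.ker N.mulVecLin := by
  rintro x ⟨v, rfl⟩
  simp only [LinearMap.mem_ker, Matrix.mulVecLin_apply, Matrix.mulVec_mulVec, NM_zero,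
    Matrix.zero_mulVec]

set_option maxHeartbeats 1000000 in
set_option synthInstance.maxHeartbeats 400000 in
theorem stmt17 :
    M.rank + Module.finrank ℚ H + N.rank = 12 := by
  have hcomap : Module.finrank ℚ (Submodule.comap (LinearMap.ker N.mulVecLin).subtype
      (LinearMap.range M.mulVecLin)) = M.rank := by
    rw [Matrix.rank]
    exact (Submodule.comapSubtypeEquivOfLe hle).finrank_eq
  have h1 := Submodule.finrank_quotient_add_finrank
    (Submodule.comap (LinearMap.ker N.mulVecLin).subtype (LinearMap.range M.mulVecLin))
  have h2 := LinearMap.finrank_range_add_finrank_ker N.mulVecLin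
  have hN : N.rank = Module.finrank ℚ (LinearMap.range N.mulVecLin) := rfl
  have hfun : Module.finrank ℚ (Fin 12 → ℚ) = 12 := by simp
  have hH : Module.finrank ℚ H = Module.finrank ℚ
      ((LinearMap.ker N.mulVecLin) ⧸ Submodule.comap (LinearMap.ker N.mulVecLin).subtype
        (LinearMap.range M.mulVecLin)) := rfl
  rw [hfun] at h2
  rw [hH, hN]
  omega
end
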